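/- (Symplectic SVD / SVD-like decomposition, real case) For any 2n×2n real invertible matrix G there exist an orthogonal matrix O ∈ O(2n), a real symplectic matrix S (i.e., Sᵀ J_n S = J_n), and an n×n positive diagonal matrix Σ, such that G = O · diag(Σ, Σ) · S. -/

import Mathlib

open Matrix Module
open scoped RealInnerProductSpace

lemma skew_orthonormal_pairs (m : ℕ) :
    ∀ (V : Type) [NormedAddCommGroup V] [InnerProductSpace ℝ V] [FiniteDimensional ℝ V],
      finrank ℝ V = 2 * m →
      ∀ K : V →ₗ[ℝ] V, (∀ x y : V, ⟪K x, y⟫ = -⟪x, K y⟫) → Function.Injective K →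
      ∃ (σ : Fin m → ℝ) (b : Fin m ⊕ Fin m → V),
        Orthonormal ℝ b ∧ (∀ i, 0 < σ i) ∧
        (∀ i, K (b (Sum.inl i)) = -(σ i • b (Sum.inr i))) ∧
        (∀ i, K (b (Sum.inr i)) = σ i • b (Sum.inl i)) := by
  induction m with
  | zero =>
    intro V _ _ _ _ K _ _
    refine ⟨Fin.elim0, fun i => i.elim Fin.elim0 Fin.elim0, ?_, fun i => i.elim0,
      fun i => i.elim0, fun i => i.elim0⟩
    constructor
    · intro i; exact i.elim (fun j => j.elim0) (fun j => j.elim0)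
    · intro i; exact i.elim (fun j => j.elim0) (fun j => j.elim0)
  | succ m ih =>
    intro V _ _ _ hrank K hskew hinj
    -- the symmetric positive operator M = -K²
    have hMsym : LinearMap.IsSymmetric (-(K ∘ₗ K)) := by
      intro x y
      simp only [LinearMap.neg_apply, LinearMap.comp_apply, inner_neg_left, inner_neg_right]
      rw [hskew (K x) y, hskew x (K y)]
      ring_nf
    -- an eigenvector of M
    obtain ⟨v, μ, hv1, hvnorm, hMv⟩ :
        ∃ (v : V) (μ : ℝ), ‖v‖ = 1 ∧ ⟪v, v⟫ = 1 ∧ (-(K ∘ₗ K)) v = μ • v := by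
      have i0 : Fin (2 * (m + 1)) := ⟨0, by omega⟩
      refine ⟨hMsym.eigenvectorBasis hrank i0, hMsym.eigenvalues hrank i0, ?_, ?_, ?_⟩
      · exact (hMsym.eigenvectorBasis hrank).orthonormal.1 i0
      · rw [real_inner_self_eq_norm_sq, (hMsym.eigenvectorBasis hrank).orthonormal.1 i0]; norm_num
      · exact hMsym.apply_eigenvectorBasis hrank i0
    have hKKv : K (K v) = -(μ • v) := by
      have := hMv
      simp only [LinearMap.neg_apply, LinearMap.comp_apply, neg_eq_iff_eq_neg] at this
      rw [this]
    have hvne : v ≠ 0 := by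
      intro h; rw [h] at hv1; simp at hv1
    have hKvKv : ⟪K v, K v⟫ = μ := by
      rw [hskew v (K v), hKKv, inner_neg_right, neg_neg, real_inner_smul_right, hvnorm, mul_one]
    have hKvne : K v ≠ 0 := fun h => hvne (hinj (by rw [h, map_zero]))
    have hμpos : 0 < μ := by
      rw [← hKvKv]
      exact lt_of_le_of_ne real_inner_self_nonneg
        (Ne.symm fun h => hKvne (inner_self_eq_zero.mp h))
    obtain ⟨σ₀, hσ₀def⟩ : ∃ t : ℝ, t = Real.sqrt μ := ⟨_, rfl⟩
    have hσ₀pos : 0 < σ₀ := hσ₀def ▸ Real.sqrt_pos.mpr hμpos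
    have hσ₀sq : σ₀ * σ₀ = μ := hσ₀def ▸ Real.mul_self_sqrt hμpos.le
    obtain ⟨f, hfdef⟩ : ∃ f : V, f = -(σ₀⁻¹ • K v) := ⟨_, rfl⟩
    have hKe : K v = -(σ₀ • f) := by
      rw [hfdef, smul_neg, neg_neg, smul_smul, mul_inv_cancel₀ hσ₀pos.ne', one_smul]
    have hKf : K f = σ₀ • v := by
      rw [hfdef, map_neg, LinearMap.map_smul, hKKv, smul_neg, neg_neg, smul_smul]
      congr 1
      field_simp
      linarith [hσ₀sq]
    have hvKv : ⟪v, K v⟫ = 0 := by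
      have h1 := hskew v v
      have h2 : ⟪K v, v⟫ = ⟪v, K v⟫ := real_inner_comm _ _
      linarith [h1, h2]
    have hef : ⟪v, f⟫ = 0 := by
      rw [hfdef, inner_neg_right, real_inner_smul_right, hvKv]; ring
    have hff : ⟪f, f⟫ = 1 := by
      rw [hfdef, inner_neg_neg, real_inner_smul_right, real_inner_smul_left, hKvKv]
      field_simp
      linarith [hσ₀sq]
    -- the orthogonal complement of span {v, f}
    obtain ⟨W, hWdef⟩ : ∃ W : Submodule ℝ V, W = (Submodule.span ℝ {v, f})ᗮ := ⟨_, rfl⟩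
    have hWc : ∀ x : V, x ∈ W ↔ ⟪v, x⟫ = 0 ∧ ⟪f, x⟫ = 0 := by
      intro x
      rw [hWdef, Submodule.mem_orthogonal]
      constructor
      · intro hx
        exact ⟨hx v (Submodule.subset_span (by simp)),
          hx f (Submodule.subset_span (by simp))⟩
      · rintro ⟨h1, h2⟩ u hu
        obtain ⟨c, d, rfl⟩ := Submodule.mem_span_pair.mp hu
        rw [inner_add_left, real_inner_smul_left, real_inner_smul_left, h1, h2]
        ring
    have hKW : ∀ x ∈ W, K x ∈ W := by
      intro x hx
      obtain ⟨h1, h2⟩ := (hWc x).mp hx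
      rw [hWc]
      constructor
      · have := hskew v x
        have h3 : ⟪K v, x⟫ = -(σ₀ * ⟪f, x⟫) := by
          rw [hKe, inner_neg_left, real_inner_smul_left]
        rw [h3, h2] at this
        linarith
      · have := hskew f x
        have h3 : ⟪K f, x⟫ = σ₀ * ⟪v, x⟫ := by
          rw [hKf, real_inner_smul_left]
        rw [h3, h1] at this
        linarith
    obtain ⟨K', hK'⟩ : ∃ K' : W →ₗ[ℝ] W, ∀ x : W, (K' x : V) = K x :=
      ⟨K.restrict hKW, fun x => rfl⟩
    have hK'skew : ∀ x y : W, ⟪K' x, y⟫ = -⟪x, K' y⟫ := by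
      intro x y
      rw [Submodule.coe_inner, Submodule.coe_inner, hK', hK']
      exact hskew x y
    have hK'inj : Function.Injective K' := by
      intro x y h
      have : (K' x : V) = K' y := by rw [h]
      rw [hK', hK'] at this
      exact Subtype.ext (hinj this)
    -- dimension count
    have honvf : Orthonormal ℝ (![v, f]) := by
      rw [orthonormal_iff_ite]
      intro i j
      fin_cases i <;> fin_cases j
      · simpa using hvnorm
      · simpa using hef
      · simpa [real_inner_comm f v] using hef
      · simpa using hff
    have hWrank : finrank ℝ W = 2 * m := by
      have hrange : Set.range ![v, f] = {v, f} := by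
        simp [Matrix.range_cons, Matrix.range_empty, Set.pair_comm]
      have h1 : Submodule.span ℝ {v, f} = Submodule.span ℝ (Set.range ![v, f]) := by
        rw [hrange]
      have h2 : finrank ℝ (Submodule.span ℝ {v, f}) = 2 := by
        rw [h1, finrank_span_eq_card honvf.linearIndependent]
        simp
      have h3 := Submodule.finrank_add_finrank_orthogonal (K := Submodule.span ℝ {v, f})
      rw [h2, hrank, ← hWdef] at h3
      omega
    obtain ⟨σ', b', hb'on, hσ'pos, hb'l, hb'r⟩ := ih W hWrank K' hK'skew hK'inj
    have hvW : ∀ x : W, ⟪v, (x : V)⟫ = 0 := fun x => ((hWc x).mp x.2).1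
    have hfW : ∀ x : W, ⟪f, (x : V)⟫ = 0 := fun x => ((hWc x).mp x.2).2
    have hb'V : ∀ i j, ⟪(b' i : V), (b' j : V)⟫ = if i = j then 1 else 0 := by
      intro i j
      rw [← Submodule.coe_inner]
      exact orthonormal_iff_ite.mp hb'on i j
    refine ⟨Fin.cons σ₀ σ', Sum.elim (Fin.cons v fun j => (b' (Sum.inl j) : V))
      (Fin.cons f fun j => (b' (Sum.inr j) : V)), ?_, ?_, ?_, ?_⟩
    · rw [orthonormal_iff_ite]
      rintro (i | i) (j | j)
      · refine Fin.cases ?_ (fun i' => ?_) i <;> refine Fin.cases ?_ (fun j' => ?_) j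
        · simpa using hvnorm
        · simpa [(Fin.succ_ne_zero j').symm] using hvW (b' (Sum.inl j'))
        · rw [real_inner_comm]
          simpa [Fin.succ_ne_zero] using hvW (b' (Sum.inl i'))
        · simpa [Fin.succ_inj] using hb'V (Sum.inl i') (Sum.inl j')
      · refine Fin.cases ?_ (fun i' => ?_) i <;> refine Fin.cases ?_ (fun j' => ?_) j
        · simpa using hef
        · simpa using hvW (b' (Sum.inr j'))
        · rw [real_inner_comm]
          simpa using hfW (b' (Sum.inl i'))
        · simpa using hb'V (Sum.inl i') (Sum.inr j')
      · refine Fin.cases ?_ (fun i' => ?_) i <;> refine Fin.cases ?_ (fun j' => ?_) j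
        · rw [real_inner_comm]
          simpa using hef
        · simpa using hfW (b' (Sum.inl j'))
        · rw [real_inner_comm]
          simpa using hvW (b' (Sum.inr i'))
        · simpa using hb'V (Sum.inr i') (Sum.inl j')
      · refine Fin.cases ?_ (fun i' => ?_) i <;> refine Fin.cases ?_ (fun j' => ?_) j
        · simpa using hff
        · simpa [(Fin.succ_ne_zero j').symm] using hfW (b' (Sum.inr j'))
        · rw [real_inner_comm]
          simpa [Fin.succ_ne_zero] using hfW (b' (Sum.inr i'))
        · simpa [Fin.succ_inj] using hb'V (Sum.inr i') (Sum.inr j')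
    · intro i
      refine Fin.cases ?_ (fun i' => ?_) i
      · simpa using hσ₀pos
      · simpa using hσ'pos i'
    · intro i
      refine Fin.cases ?_ (fun i' => ?_) i
      · simpa using hKe
      · have h1 : K ((b' (Sum.inl i') : W) : V) = ((K' (b' (Sum.inl i')) : W) : V) :=
          (hK' _).symm
        have h2 := hb'l i'
        simp only [Sum.elim_inl, Sum.elim_inr, Fin.cons_succ, h1, h2]
        push_cast
        ring_nf
    · intro i
      refine Fin.cases ?_ (fun i' => ?_) i
      · simpa using hKf
      · have h1 : K ((b' (Sum.inr i') : W) : V) = ((K' (b' (Sum.inr i')) : W) : V) :=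
          (hK' _).symm
        have h2 := hb'r i'
        simp only [Sum.elim_inl, Sum.elim_inr, Fin.cons_succ, h1, h2]
        push_cast
        ring_nf

lemma skew_matrix_normal_form (n : ℕ) (K : Matrix (Fin n ⊕ Fin n) (Fin n ⊕ Fin n) ℝ)
    (hKskew : Kᵀ = -K) (hK : IsUnit K.det) :
    ∃ (O : Matrix (Fin n ⊕ Fin n) (Fin n ⊕ Fin n) ℝ) (σ : Fin n → ℝ),
      Oᵀ * O = 1 ∧ (∀ i, 0 < σ i) ∧
      K = O * fromBlocks 0 (diagonal σ) (-(diagonal σ)) 0 * Oᵀ := by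
  classical
  have hIP : ∀ x y : EuclideanSpace ℝ (Fin n ⊕ Fin n),
      ⟪x, y⟫ = (x : (Fin n ⊕ Fin n) → ℝ) ⬝ᵥ (y : (Fin n ⊕ Fin n) → ℝ) := by
    intro x y
    simp [PiLp.inner_apply, RCLike.inner_apply, dotProduct, Fintype.sum_sum_type, mul_comm]
  obtain ⟨Kl, hKl⟩ : ∃ Kl : EuclideanSpace ℝ (Fin n ⊕ Fin n) →ₗ[ℝ]
      EuclideanSpace ℝ (Fin n ⊕ Fin n),
      ∀ x : EuclideanSpace ℝ (Fin n ⊕ Fin n), (Kl x : (Fin n ⊕ Fin n) → ℝ) = K *ᵥ x :=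
    ⟨{ toFun := fun x => WithLp.toLp 2 (K *ᵥ x)
       map_add' := fun x y => by simp [mulVec_add]
       map_smul' := fun c x => by simp [mulVec_smul] }, fun _ => rfl⟩
  have hskew : ∀ x y : EuclideanSpace ℝ (Fin n ⊕ Fin n), ⟪Kl x, y⟫ = -⟪x, Kl y⟫ := by
    intro x y
    rw [hIP, hIP, hKl, hKl]
    rw [dotProduct_comm, dotProduct_mulVec, ← mulVec_transpose, hKskew, neg_mulVec,
      neg_dotProduct, dotProduct_comm]
  have hinj : Function.Injective Kl := by
    intro x y h
    have h2 : K *ᵥ (x : (Fin n ⊕ Fin n) → ℝ) = K *ᵥ y := by rw [← hKl, ← hKl, h]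
    have h3 : K⁻¹ *ᵥ (K *ᵥ (x : (Fin n ⊕ Fin n) → ℝ)) = K⁻¹ *ᵥ (K *ᵥ y) := by rw [h2]
    rw [mulVec_mulVec, mulVec_mulVec, Matrix.nonsing_inv_mul K hK, one_mulVec, one_mulVec] at h3
    exact WithLp.ofLp_injective 2 h3
  have hrank : finrank ℝ (EuclideanSpace ℝ (Fin n ⊕ Fin n)) = 2 * n := by
    simp [finrank_euclideanSpace]
    omega
  obtain ⟨σ, b, hon, hpos, hbl, hbr⟩ :=
    skew_orthonormal_pairs n (EuclideanSpace ℝ (Fin n ⊕ Fin n)) hrank Kl hskew hinj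
  refine ⟨Matrix.of fun i j => (b j : (Fin n ⊕ Fin n) → ℝ) i, σ, ?_, hpos, ?_⟩
  · ext i j
    rw [Matrix.mul_apply, Matrix.one_apply]
    have := orthonormal_iff_ite.mp hon i j
    rw [hIP] at this
    simpa [dotProduct] using this
  · have hOO : (Matrix.of fun i j => (b j : (Fin n ⊕ Fin n) → ℝ) i)ᵀ *
        (Matrix.of fun i j => (b j : (Fin n ⊕ Fin n) → ℝ) i) = 1 := by
      ext i j
      rw [Matrix.mul_apply, Matrix.one_apply]
      have := orthonormal_iff_ite.mp hon i j
      rw [hIP] at this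
      simpa [dotProduct] using this
    have hOOT : (Matrix.of fun i j => (b j : (Fin n ⊕ Fin n) → ℝ) i) *
        (Matrix.of fun i j => (b j : (Fin n ⊕ Fin n) → ℝ) i)ᵀ = 1 :=
      mul_eq_one_comm.mp hOO
    have hKO : K * (Matrix.of fun i j => (b j : (Fin n ⊕ Fin n) → ℝ) i) =
        (Matrix.of fun i j => (b j : (Fin n ⊕ Fin n) → ℝ) i) *
          fromBlocks 0 (diagonal σ) (-(diagonal σ)) 0 := by
      ext i j
      have hlhs : (K * (Matrix.of fun i j => (b j : (Fin n ⊕ Fin n) → ℝ) i)) i j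
          = (Kl (b j) : (Fin n ⊕ Fin n) → ℝ) i := by
        rw [hKl]
        simp [Matrix.mul_apply, Matrix.mulVec, dotProduct]
      rw [hlhs]
      rcases j with j' | j'
      · rw [hbl j']
        simp [Matrix.mul_apply, Fintype.sum_sum_type, Matrix.diagonal_apply,
          Finset.mul_sum, mul_comm]
      · rw [hbr j']
        simp [Matrix.mul_apply, Fintype.sum_sum_type, Matrix.diagonal_apply,
          Finset.mul_sum, mul_comm]
    calc K = K * ((Matrix.of fun i j => (b j : (Fin n ⊕ Fin n) → ℝ) i) *
          (Matrix.of fun i j => (b j : (Fin n ⊕ Fin n) → ℝ) i)ᵀ) := by rw [hOOT, Matrix.mul_one]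
      _ = (K * (Matrix.of fun i j => (b j : (Fin n ⊕ Fin n) → ℝ) i)) *
          (Matrix.of fun i j => (b j : (Fin n ⊕ Fin n) → ℝ) i)ᵀ := by rw [Matrix.mul_assoc]
      _ = _ := by rw [hKO]

/-- Symplectic SVD (SVD-like decomposition, real case):
`G = O · diag(Σ, Σ) · S` with `O` orthogonal and `S` real symplectic. -/
theorem symplectic_svd_real (n : ℕ)
    (G : Matrix (Fin n ⊕ Fin n) (Fin n ⊕ Fin n) ℝ) (hG : IsUnit G.det) :
    ∃ (O S : Matrix (Fin n ⊕ Fin n) (Fin n ⊕ Fin n) ℝ) (σ : Fin n → ℝ),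
      Oᵀ * O = 1 ∧
      Sᵀ * Matrix.fromBlocks 0 1 (-1) 0 * S = Matrix.fromBlocks 0 1 (-1) 0 ∧
      (∀ i, 0 < σ i) ∧
      G = O * Matrix.fromBlocks (Matrix.diagonal σ) 0 0 (Matrix.diagonal σ) * S := by
  classical
  set J' : Matrix (Fin n ⊕ Fin n) (Fin n ⊕ Fin n) ℝ := fromBlocks 0 1 (-1) 0 with hJ'def
  have hJ'neg : J' = -(Matrix.J (Fin n) ℝ) := by
    rw [hJ'def, Matrix.J, Matrix.fromBlocks_neg]
    norm_num
  have hJ'T : J'ᵀ = -J' := by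
    rw [hJ'neg, transpose_neg, Matrix.J_transpose, neg_neg]
  have hJ'sq : J' * J' = -1 := by
    rw [hJ'neg, Matrix.neg_mul, Matrix.mul_neg, neg_neg, Matrix.J_squared]
  have hJ'unit : IsUnit J'.det := by
    have h := Matrix.det_mul J' J'
    rw [hJ'sq] at h
    have hcard : Even (Fintype.card (Fin n ⊕ Fin n)) := by
      simp [Fintype.card_sum]
    have hd1 : (det (-1 : Matrix (Fin n ⊕ Fin n) (Fin n ⊕ Fin n) ℝ)) = 1 := by
      rw [show (-1 : Matrix (Fin n ⊕ Fin n) (Fin n ⊕ Fin n) ℝ) = -(1 : Matrix _ _ ℝ) from rfl,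
        Matrix.det_neg, det_one, mul_one]
      exact Even.neg_one_pow hcard
    rw [hd1] at h
    exact IsUnit.of_mul_eq_one _ h.symm
  -- the skew matrix K = G * J' * Gᵀ
  set K : Matrix (Fin n ⊕ Fin n) (Fin n ⊕ Fin n) ℝ := G * J' * Gᵀ with hKdef
  have hKskew : Kᵀ = -K := by
    rw [hKdef, transpose_mul, transpose_mul, transpose_transpose, hJ'T]
    simp [Matrix.mul_assoc]
  have hKunit : IsUnit K.det := by
    rw [hKdef, det_mul, det_mul, det_transpose]
    exact (hG.mul hJ'unit).mul hG
  obtain ⟨O, σ, hOO, hσpos, hKeq⟩ := skew_matrix_normal_form n K hKskew hKunit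
  have hOOT : O * Oᵀ = 1 := mul_eq_one_comm.mp hOO
  set δ : Fin n → ℝ := fun i => Real.sqrt (σ i) with hδdef
  have hδpos : ∀ i, 0 < δ i := fun i => Real.sqrt_pos.mpr (hσpos i)
  have hδsq : ∀ i, δ i * δ i = σ i := fun i => Real.mul_self_sqrt (hσpos i).le
  set D : Matrix (Fin n ⊕ Fin n) (Fin n ⊕ Fin n) ℝ :=
    fromBlocks (diagonal δ) 0 0 (diagonal δ) with hDdef
  set Di : Matrix (Fin n ⊕ Fin n) (Fin n ⊕ Fin n) ℝ :=
    fromBlocks (diagonal fun i => (δ i)⁻¹) 0 0 (diagonal fun i => (δ i)⁻¹) with hDidef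
  have hdd : diagonal δ * diagonal (fun i => (δ i)⁻¹) = 1 := by
    rw [diagonal_mul_diagonal]
    convert diagonal_one with i
    exact mul_inv_cancel₀ (hδpos i).ne'
  have hdd' : diagonal (fun i => (δ i)⁻¹) * diagonal δ = 1 := by
    rw [diagonal_mul_diagonal]
    convert diagonal_one with i
    exact inv_mul_cancel₀ (hδpos i).ne'
  have hDDi : D * Di = 1 := by
    rw [hDdef, hDidef, fromBlocks_multiply]
    simp [hdd, ← fromBlocks_one]
  have hDiT : Diᵀ = Di := by
    rw [hDidef, fromBlocks_transpose]
    simp [diagonal_transpose]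
  set S : Matrix (Fin n ⊕ Fin n) (Fin n ⊕ Fin n) ℝ := Di * Oᵀ * G with hSdef
  -- S * J' * Sᵀ = J'
  have h1 : diagonal (fun i => (δ i)⁻¹) * (diagonal σ * diagonal fun i => (δ i)⁻¹) = 1 := by
    rw [diagonal_mul_diagonal, diagonal_mul_diagonal]
    convert diagonal_one with i
    rw [← hδsq i]
    field_simp
    exact div_self (hδpos i).ne' 
  have hDiJDi : Di * ((fromBlocks 0 (diagonal σ) (-(diagonal σ)) 0) * Di) = J' := by
    rw [hDidef, hJ'def, fromBlocks_multiply, fromBlocks_multiply]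
    simp only [Matrix.mul_zero, Matrix.zero_mul, Matrix.mul_neg, Matrix.neg_mul, add_zero,
      zero_add, neg_zero, Matrix.mul_assoc, h1]
  have hSJS : S * J' * Sᵀ = J' := by
    have hKO : Oᵀ * (K * O) = fromBlocks 0 (diagonal σ) (-(diagonal σ)) 0 := by
      rw [hKeq]
      calc Oᵀ * (O * fromBlocks 0 (diagonal σ) (-diagonal σ) 0 * Oᵀ * O)
          = (Oᵀ * O) * fromBlocks 0 (diagonal σ) (-diagonal σ) 0 * (Oᵀ * O) := by
            simp only [Matrix.mul_assoc]
        _ = _ := by rw [hOO, Matrix.one_mul, Matrix.mul_one]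
    have e1 : S * J' * Sᵀ = Di * (Oᵀ * (K * O) * Di) := by
      rw [hSdef, hKdef, transpose_mul, transpose_mul, hDiT]
      simp only [Matrix.mul_assoc, transpose_transpose]
    rw [e1, hKO]
    exact hDiJDi
  have hSJmS : S * Matrix.J (Fin n) ℝ * Sᵀ = Matrix.J (Fin n) ℝ := by
    have := hSJS
    rw [hJ'neg, Matrix.mul_neg, Matrix.neg_mul] at this
    exact neg_inj.mp this
  have hSTJS : Sᵀ * J' * S = J' := by
    have hmem : S ∈ Matrix.symplecticGroup (Fin n) ℝ := SymplecticGroup.mem_iff.mpr hSJmS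
    have h := SymplecticGroup.mem_iff'.mp hmem
    rw [hJ'neg, Matrix.mul_neg, Matrix.neg_mul, h]
  refine ⟨O, S, δ, hOO, ?_, hδpos, ?_⟩
  · exact hSTJS
  · rw [← hDdef, hSdef]
    calc G = (O * Oᵀ) * G := by rw [hOOT, Matrix.one_mul]
      _ = O * D * (Di * Oᵀ * G) := by
          rw [show O * D * (Di * Oᵀ * G) = O * ((D * Di) * (Oᵀ * G)) by
            simp only [Matrix.mul_assoc], hDDi, Matrix.one_mul, Matrix.mul_assoc]
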